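/- Let N ≥ 8 be an integer divisible by 4. The N/4 × N/4 real matrix M_2 defined as follows is invertible: the first row of M_2 is (3, −4, 1, 0, …, 0); for 2 ≤ r ≤ N/4 the r-th row is the sum of the vector with entries 1, −2, 1 in columns 1, 2, 3 and the vector with entries −1, +2, −1 in columns r, r+1, r+2 respectively, where any contribution to column N/4 + 1 is discarded, any contribution to column N/4 + 2 is placed into column N/4 instead, and contributions to coinciding columns are added. -/
import Mathlib


/-- The `N/4 × N/4` matrix `M₂` (1-indexed description; the `Fin` index `r`
corresponds to row `r+1` and `q` to column `q+1`).  The first row is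
`(3, −4, 1, 0, …, 0)`.  For `2 ≤ r ≤ N/4` the `r`-th row is the sum of the
vector with entries `1, −2, 1` in columns `1, 2, 3` and the vector with entries
`−1, 2, −1` in columns `r, r+1, r+2`, where any contribution to column
`N/4 + 1` is discarded and any contribution to column `N/4 + 2` is placed into
column `N/4` instead (contributions to coinciding columns are added; note the
contributions to columns `r+1` and `r+2` vanish automatically below whenever
those column indices exceed `N/4`, which realizes the discarding rule). -/
def M2mat (N : ℕ) : Matrix (Fin (N / 4)) (Fin (N / 4)) ℝ := fun r q =>
  if (r : ℕ) + 1 = 1 then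
    (if (q : ℕ) + 1 = 1 then (3 : ℝ) else 0) +
    (if (q : ℕ) + 1 = 2 then (-4 : ℝ) else 0) +
    (if (q : ℕ) + 1 = 3 then (1 : ℝ) else 0)
  else
    (if (q : ℕ) + 1 = 1 then (1 : ℝ) else 0) +
    (if (q : ℕ) + 1 = 2 then (-2 : ℝ) else 0) +
    (if (q : ℕ) + 1 = 3 then (1 : ℝ) else 0) +
    (if (q : ℕ) + 1 = (r : ℕ) + 1 then (-1 : ℝ) else 0) +
    (if (q : ℕ) + 1 = (r : ℕ) + 2 then (2 : ℝ) else 0) +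
    (if (q : ℕ) + 1 = (r : ℕ) + 3 then (-1 : ℝ) else 0) +
    (if (q : ℕ) + 1 = N / 4 ∧ (r : ℕ) + 1 = N / 4 then (-1 : ℝ) else 0)

/-- 1-indexed extension-by-zero of a vector on `Fin n`. -/
noncomputable def Yext (n : ℕ) (v : Fin n → ℝ) (k : ℕ) : ℝ :=
  if h : 1 ≤ k ∧ k ≤ n then v ⟨k - 1, by omega⟩ else 0

lemma sum_one (n : ℕ) (v : Fin n → ℝ) (k : ℕ) (a : ℝ) :
    ∑ q : Fin n, (if (q : ℕ) + 1 = k then a else 0) * v q = a * Yext n v k := by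
  unfold Yext
  by_cases h : 1 ≤ k ∧ k ≤ n
  · rw [dif_pos h]
    rw [Finset.sum_eq_single (⟨k - 1, by omega⟩ : Fin n)]
    · rw [if_pos (by simp; omega)]
    · intro b _ hb
      rw [if_neg, zero_mul]
      intro hbk
      exact hb (Fin.ext (by simp; omega))
    · intro h'; exact absurd (Finset.mem_univ _) h'
  · rw [dif_neg h, mul_zero]
    apply Finset.sum_eq_zero
    intro q _
    rw [if_neg, zero_mul]
    intro hq
    exact h ⟨by omega, by have := q.isLt; omega⟩

theorem M2mat_isUnit (N : ℕ) (hN4 : 4 ∣ N) (hN8 : 8 ≤ N) : IsUnit (M2mat N) := by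
  have hn : 2 ≤ N / 4 := by omega
  rw [Matrix.isUnit_iff_isUnit_det, isUnit_iff_ne_zero]
  intro hdet
  obtain ⟨v, hv0, hMv⟩ := Matrix.exists_mulVec_eq_zero_iff.mpr hdet
  apply hv0
  set Y : ℕ → ℝ := Yext (N / 4) v with hYdef
  have Yzero : ∀ k, N / 4 < k → Y k = 0 := by
    intro k hk
    rw [hYdef]; unfold Yext; rw [dif_neg (by omega)]
  obtain ⟨c, hc⟩ : ∃ c : ℝ, c = Y 1 - 2 * Y 2 + Y 3 := ⟨_, rfl⟩
  have E1 : 3 * Y 1 + -4 * Y 2 + 1 * Y 3 = 0 := by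
    have h0 : (0 : ℕ) < N / 4 := by omega
    have h := congrFun hMv ⟨0, h0⟩
    simp only [Matrix.mulVec, dotProduct, Pi.zero_apply, M2mat, Fin.val_mk,
      if_true] at h
    simp only [add_mul] at h
    simp only [Finset.sum_add_distrib, sum_one] at h
    rw [← hYdef] at h
    exact h
  have E2 : ∀ s : ℕ, 2 ≤ s → s ≤ N / 4 →
      1 * Y 1 + -2 * Y 2 + 1 * Y 3 + -1 * Y s + 2 * Y (s + 1) + -1 * Y (s + 2)
        + (if s = N / 4 then (-1 : ℝ) * Y (N / 4) else 0) = 0 := by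
    intro s hs2 hsn
    have hr : s - 1 < N / 4 := by omega
    have h := congrFun hMv ⟨s - 1, hr⟩
    simp only [Matrix.mulVec, dotProduct, Pi.zero_apply, M2mat, Fin.val_mk] at h
    rw [show s - 1 + 1 = s by omega, show s - 1 + 2 = s + 1 by omega,
        show s - 1 + 3 = s + 2 by omega] at h
    have hs1 : ¬ (s = 1) := by omega
    simp only [if_neg hs1] at h
    by_cases hsn' : s = N / 4
    · simp only [hsn', eq_self_iff_true, and_true, if_true] at h ⊢
      simp only [add_mul] at h
      simp only [Finset.sum_add_distrib, sum_one] at h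
      rw [← hYdef] at h
      exact h
    · simp only [hsn', and_false, if_false, add_zero] at h ⊢
      simp only [add_mul] at h
      simp only [Finset.sum_add_distrib, sum_one] at h
      rw [← hYdef] at h
      exact h
  have key : ∀ m : ℕ, ∀ s : ℕ, 2 ≤ s → s ≤ N / 4 → N / 4 - s = m →
      Y s = ((N / 4 - s + 1 : ℕ) : ℝ) ^ 2 * c / 2 := by
    intro m
    induction m using Nat.strong_induction_on with
    | _ m ih =>
      intro s hs2 hsn hm
      by_cases h1 : s = N / 4
      · have e := E2 s hs2 hsn
        rw [if_pos h1, h1] at e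
        have z1 : Y (N / 4 + 1) = 0 := Yzero _ (by omega)
        have z2 : Y (N / 4 + 2) = 0 := Yzero _ (by omega)
        rw [h1, show N / 4 - (N / 4) + 1 = 1 by omega]
        push_cast
        linear_combination (-1 : ℝ) / 2 * e - (1 : ℝ) / 2 * hc + z1 - (1 : ℝ) / 2 * z2
      · by_cases h2 : s + 1 = N / 4
        · have e := E2 s hs2 hsn
          rw [if_neg h1, add_zero] at e
          have y1 := ih 0 (by omega) (s + 1) (by omega) (by omega) (by omega)
          have z2 : Y (s + 2) = 0 := Yzero _ (by omega)
          rw [show N / 4 - (s + 1) + 1 = 1 by omega] at y1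
          rw [show N / 4 - s + 1 = 2 by omega]
          push_cast at y1 ⊢
          linear_combination (-1 : ℝ) * e - hc + 2 * y1 - z2
        · have hs2n : s + 2 ≤ N / 4 := by omega
          have e := E2 s hs2 hsn
          rw [if_neg h1, add_zero] at e
          have y1 := ih (N / 4 - (s + 1)) (by omega) (s + 1) (by omega) (by omega) rfl
          have y2 := ih (N / 4 - (s + 2)) (by omega) (s + 2) (by omega) hs2n rfl
          rw [show N / 4 - (s + 1) + 1 = N / 4 - s by omega] at y1
          rw [show N / 4 - (s + 2) + 1 = N / 4 - s - 1 by omega] at y2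
          have cast1 : ((N / 4 - s - 1 : ℕ) : ℝ) = ((N / 4 - s : ℕ) : ℝ) - 1 := by
            rw [Nat.cast_sub (by omega), Nat.cast_one]
          have cast2 : ((N / 4 - s + 1 : ℕ) : ℝ) = ((N / 4 - s : ℕ) : ℝ) + 1 := by
            push_cast; ring
          rw [cast1] at y2
          rw [cast2]
          linear_combination (-1 : ℝ) * e - hc + 2 * y1 - y2
  have hc0 : c = 0 := by
    have y2 := key (N / 4 - 2) 2 le_rfl hn rfl
    rw [show N / 4 - 2 + 1 = N / 4 - 1 by omega] at y2
    have y3 : Y 3 = ((N / 4 - 2 : ℕ) : ℝ) ^ 2 * c / 2 := by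
      by_cases h3 : 3 ≤ N / 4
      · have h := key (N / 4 - 3) 3 (by omega) h3 rfl
        rw [show N / 4 - 3 + 1 = N / 4 - 2 by omega] at h
        exact h
      · rw [Yzero 3 (by omega), show N / 4 - 2 = 0 by omega]
        norm_num
    have cast1 : ((N / 4 - 1 : ℕ) : ℝ) = ((N / 4 : ℕ) : ℝ) - 1 := by
      rw [Nat.cast_sub (by omega), Nat.cast_one]
    have cast2 : ((N / 4 - 2 : ℕ) : ℝ) = ((N / 4 : ℕ) : ℝ) - 2 := by
      rw [Nat.cast_sub (by omega), Nat.cast_ofNat]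
    rw [cast1] at y2
    rw [cast2] at y3
    have h2nc : 2 * ((N / 4 : ℕ) : ℝ) * c = 0 := by
      linear_combination E1 + 3 * hc - 2 * y2 + 2 * y3
    have hnn : (2 : ℝ) ≤ ((N / 4 : ℕ) : ℝ) := by exact_mod_cast hn
    rcases mul_eq_zero.mp h2nc with h | h
    · linarith
    · exact h
  have keyz : ∀ s : ℕ, 2 ≤ s → s ≤ N / 4 → Y s = 0 := by
    intro s hs2 hsn
    rw [key (N / 4 - s) s hs2 hsn rfl, hc0]
    ring
  have hY1 : Y 1 = 0 := by
    have y2 : Y 2 = 0 := keyz 2 le_rfl hn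
    have y3 : Y 3 = 0 := by
      by_cases h3 : 3 ≤ N / 4
      · exact keyz 3 (by omega) h3
      · exact Yzero 3 (by omega)
    rw [hc0, y2, y3] at hc
    linarith
  funext q
  show v q = 0
  have hq : Y ((q : ℕ) + 1) = v q := by
    rw [hYdef]; unfold Yext
    rw [dif_pos ⟨by omega, by have := q.isLt; omega⟩]
    exact congrArg v (Fin.ext (by simp))
  rw [← hq]
  by_cases h1q : (q : ℕ) = 0
  · rw [h1q]
    simpa using hY1
  · exact keyz _ (by omega) (by have := q.isLt; omega)
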